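/- Assume the Continuum Hypothesis. Let X be a Tychonoff (completely regular T1) topological space of countable tightness such that every open cover of X of size at most ω₁ has a countable subcover. Then every open cover of X has a countable subcover. -/

import Mathlib

open Set Cardinal Topology

universe u v

/-- A space is quasi-Lindelöf if every open cover has a countable subcover
(no separation axioms assumed). -/
def QuasiLindelofSp (X : Type u) [TopologicalSpace X] : Prop :=
  ∀ 𝒰 : Set (Set X), (∀ U ∈ 𝒰, IsOpen U) → ⋃₀ 𝒰 = Set.univ →
    ∃ 𝒱 ⊆ 𝒰, 𝒱.Countable ∧ ⋃₀ 𝒱 = Set.univ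

/-- Lindelöf in the sense of Engelking: regular (T3, including T1) and
every open cover has a countable subcover. -/
def EngLindelofSp (X : Type u) [TopologicalSpace X] : Prop :=
  RegularSpace X ∧ T1Space X ∧ QuasiLindelofSp X

/-- X is productively Lindelöf if X × Y is Lindelöf for every Lindelöf space Y. -/
def ProductivelyLindelofSp (X : Type u) [TopologicalSpace X] : Prop :=
  ∀ (Y : Type u) [TopologicalSpace Y], EngLindelofSp Y → EngLindelofSp (X × Y)

/-- X is productively quasi-Lindelöf if X × Y is quasi-Lindelöf for every Lindelöf space Y. -/
def ProductivelyQuasiLindelofSp (X : Type u) [TopologicalSpace X] : Prop :=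
  ∀ (Y : Type u) [TopologicalSpace Y], EngLindelofSp Y → QuasiLindelofSp (X × Y)

/-- X is powerfully Lindelöf if X^ω is Lindelöf. -/
def PowerfullyLindelofSp (X : Type u) [TopologicalSpace X] : Prop :=
  EngLindelofSp (ℕ → X)

/-- X is powerfully quasi-Lindelöf if X^ω is quasi-Lindelöf. -/
def PowerfullyQuasiLindelofSp (X : Type u) [TopologicalSpace X] : Prop :=
  QuasiLindelofSp (ℕ → X)

/-- Tightness of X is at most κ. -/
def TightnessLE (X : Type u) [TopologicalSpace X] (κ : Cardinal.{u}) : Prop :=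
  ∀ (A : Set X) (x : X), x ∈ closure A → ∃ B ⊆ A, #B ≤ κ ∧ x ∈ closure B

/-- X has countable tightness. -/
def CountableTightness (X : Type u) [TopologicalSpace X] : Prop :=
  ∀ (A : Set X) (x : X), x ∈ closure A → ∃ B ⊆ A, B.Countable ∧ x ∈ closure B

/-- The Lindelöf number of X is at most κ: every open cover has a subcover of size ≤ κ. -/
def LindelofNumberLE (X : Type u) [TopologicalSpace X] (κ : Cardinal.{u}) : Prop :=
  ∀ 𝒰 : Set (Set X), (∀ U ∈ 𝒰, IsOpen U) → ⋃₀ 𝒰 = Set.univ →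
    ∃ 𝒱 ⊆ 𝒰, #𝒱 ≤ κ ∧ ⋃₀ 𝒱 = Set.univ

/-- The weight of X is at most κ: there is a base of size ≤ κ. -/
def WeightLE (X : Type u) [TopologicalSpace X] (κ : Cardinal.{u}) : Prop :=
  ∃ B : Set (Set X), TopologicalSpace.IsTopologicalBasis B ∧ #B ≤ κ

/-- N is a network for X. -/
def IsNetwork (X : Type u) [TopologicalSpace X] (N : Set (Set X)) : Prop :=
  ∀ (x : X) (U : Set X), IsOpen U → x ∈ U → ∃ n ∈ N, x ∈ n ∧ n ⊆ U

/-- X is linearly Lindelöf: regular (incl. T1) and every open cover linearly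
ordered by inclusion has a countable subcover. -/
def LinearlyLindelofSp (X : Type u) [TopologicalSpace X] : Prop :=
  RegularSpace X ∧ T1Space X ∧
    ∀ 𝒰 : Set (Set X), (∀ U ∈ 𝒰, IsOpen U) → IsChain (· ⊆ ·) 𝒰 → ⋃₀ 𝒰 = Set.univ →
      ∃ 𝒱 ⊆ 𝒰, 𝒱.Countable ∧ ⋃₀ 𝒱 = Set.univ

/-- U ⊆ X^ω is a basic open set: a product of open sets, all but finitely many of
which equal X. -/
def IsBasicOpen (X : Type u) [TopologicalSpace X] (U : Set (ℕ → X)) : Prop :=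
  ∃ V : ℕ → Set X, (∀ i, IsOpen (V i)) ∧ {i | V i ≠ Set.univ}.Finite ∧
    U = Set.pi Set.univ V

/-- A family of subsets of Z is point-κ if every point belongs to at most κ members. -/
def PointLE {Z : Type u} (𝒲 : Set (Set Z)) (κ : Cardinal.{u}) : Prop :=
  ∀ z : Z, #({W ∈ 𝒲 | z ∈ W}) ≤ κ

/-- A non-empty space is zero-dimensional if it is T1 and has a base of clopen sets. -/
def ZeroDimensionalSp (Y : Type u) [TopologicalSpace Y] : Prop :=
  Nonempty Y ∧ T1Space Y ∧
    ∃ B : Set (Set Y), TopologicalSpace.IsTopologicalBasis B ∧ ∀ b ∈ B, IsClopen b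

namespace Stmt5Proof

lemma CH_transfer (h : Cardinal.continuum.{v} = Cardinal.aleph 1) :
    Cardinal.continuum.{u} = Cardinal.aleph 1 := by
  have h1 : Cardinal.continuum.{max u v} = Cardinal.aleph 1 := by
    have := congrArg (Cardinal.lift.{u}) h
    rwa [Cardinal.lift_continuum, Cardinal.lift_aleph, Ordinal.lift_one] at this
  have h2 : Cardinal.lift.{v} (Cardinal.continuum.{u}) =
      Cardinal.lift.{v} (Cardinal.aleph 1) := by
    rw [Cardinal.lift_continuum, Cardinal.lift_aleph, Ordinal.lift_one]
    exact h1
  exact Cardinal.lift_inj.1 h2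


lemma pow_a1 (hCH : Cardinal.continuum.{u} = Cardinal.aleph 1) :
    (Cardinal.aleph 1 : Cardinal.{u}) ^ Cardinal.aleph0.{u} = Cardinal.aleph 1 := by
  rw [← hCH, ← Cardinal.two_power_aleph0, ← Cardinal.power_mul, Cardinal.aleph0_mul_aleph0]

variable {X : Type u} [TopologicalSpace X]

lemma sep_cover [RegularSpace X]
    (hCH : Cardinal.continuum.{u} = Cardinal.aleph 1)
    {𝒰 : Set (Set X)} (hopen : ∀ U ∈ 𝒰, IsOpen U) (hcov : ⋃₀ 𝒰 = Set.univ)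
    (hsmall : ∀ 𝒲 : Set (Set X), (∀ U ∈ 𝒲, IsOpen U) → ⋃₀ 𝒲 = Set.univ →
      #𝒲 ≤ Cardinal.aleph 1 → ∃ 𝒱 ⊆ 𝒲, 𝒱.Countable ∧ ⋃₀ 𝒱 = Set.univ)
    {B : Set X} (hB : B.Countable) :
    ∃ 𝒱 ⊆ 𝒰, 𝒱.Countable ∧ closure B ⊆ ⋃₀ 𝒱 := by
  rcases eq_empty_or_nonempty (closure B) with hcl | hcl
  · exact ⟨∅, empty_subset _, countable_empty, by rw [hcl, sUnion_empty]⟩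
  have hne : Nonempty (closure B) := hcl.to_subtype
  -- choose O y ∈ 𝒰 containing y
  have hO : ∀ y : closure B, ∃ O, O ∈ 𝒰 ∧ (y : X) ∈ O := by
    intro y
    have : (y : X) ∈ ⋃₀ 𝒰 := by rw [hcov]; trivial
    obtain ⟨O, hO, hyO⟩ := this
    exact ⟨O, hO, hyO⟩
  choose O hO𝒰 hyO using hO
  -- choose V y open with y ∈ V y and closure (V y) ⊆ O y
  have hV : ∀ y : closure B, ∃ V, IsOpen V ∧ (y : X) ∈ V ∧ closure V ⊆ O y := by
    intro y
    obtain ⟨t, ht, htc, hts⟩ := exists_mem_nhds_isClosed_subset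
      ((hopen _ (hO𝒰 y)).mem_nhds (hyO y))
    refine ⟨interior t, isOpen_interior, mem_interior_iff_mem_nhds.2 ht, ?_⟩
    exact (closure_minimal interior_subset htc).trans hts
  choose V hVopen hyV hVcl using hV
  set f : closure B → Set X := fun y => V y ∩ B with hf
  set g : Set X → closure B := Function.invFun f with hg
  set 𝒲 : Set (Set X) := (fun S => O (g S)) '' (Set.range f) with h𝒲
  -- 𝒲 covers closure B
  have hWcov : closure B ⊆ ⋃₀ 𝒲 := by
    intro x hx
    have hxf : f (g (f ⟨x, hx⟩)) = f ⟨x, hx⟩ := Function.invFun_eq ⟨⟨x, hx⟩, rfl⟩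
    set y' := g (f ⟨x, hx⟩)
    have hxcl : x ∈ closure (V ⟨x, hx⟩ ∩ B) := by
      apply (hVopen ⟨x, hx⟩).inter_closure
      exact ⟨hyV ⟨x, hx⟩, hx⟩
    have : x ∈ O y' := by
      apply hVcl y'
      apply closure_mono (inter_subset_left (t := B))
      show x ∈ closure (f y')
      rw [hxf]
      exact hxcl
    exact ⟨O y', ⟨f ⟨x, hx⟩, ⟨⟨x, hx⟩, rfl⟩, rfl⟩, this⟩
  -- cardinality of 𝒲
  have hWcard : #𝒲 ≤ Cardinal.aleph 1 := by
    have h1 : #𝒲 ≤ #(Set.range f) := mk_image_le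
    have h2 : #(Set.range f) ≤ #(Set B) := by
      refine mk_le_of_injective (f := fun S : Set.range f =>
        ((Subtype.val ⁻¹' (S : Set X)) : Set B)) ?_
      rintro ⟨S, yS, hS⟩ ⟨T, yT, hT⟩ h
      have hSB : S ⊆ B := by rw [← hS, hf]; exact inter_subset_right
      have hTB : T ⊆ B := by rw [← hT, hf]; exact inter_subset_right
      simp only [Subtype.mk.injEq] at h ⊢
      refine Subtype.ext ((preimage_eq_preimage' ?_ ?_).1 h) <;> rw [Subtype.range_coe] <;> assumption
    have h3 : #(Set B) ≤ Cardinal.aleph 1 := by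
      rw [mk_set]
      calc (2 : Cardinal.{u}) ^ #B ≤ 2 ^ Cardinal.aleph0.{u} :=
            power_le_power_left (by norm_num) hB.le_aleph0
        _ = Cardinal.aleph 1 := by rw [Cardinal.two_power_aleph0, hCH]
    exact h1.trans (h2.trans h3)
  -- apply hsmall to 𝒲 ∪ {(closure B)ᶜ}
  obtain ⟨𝒱', h𝒱'sub, h𝒱'c, h𝒱'cov⟩ :=
    hsmall (𝒲 ∪ {(closure B)ᶜ})
      (by
        rintro U (⟨S, hS, rfl⟩ | rfl)
        · exact hopen _ (hO𝒰 _)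
        · exact isClosed_closure.isOpen_compl)
      (by
        apply eq_univ_of_forall
        intro x
        by_cases hx : x ∈ closure B
        · obtain ⟨W, hW, hxW⟩ := hWcov hx
          exact ⟨W, Or.inl hW, hxW⟩
        · exact ⟨(closure B)ᶜ, Or.inr rfl, hx⟩)
      (by
        refine (mk_union_le _ _).trans ?_
        have : #({(closure B)ᶜ} : Set (Set X)) = 1 := mk_singleton _
        rw [this]
        calc #𝒲 + 1 ≤ Cardinal.aleph 1 + 1 := by gcongr
          _ = Cardinal.aleph 1 := add_one_eq (aleph0_le_aleph 1))
  refine ⟨𝒱' ∩ 𝒲, fun W hW => ?_, h𝒱'c.mono inter_subset_left, ?_⟩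
  · obtain ⟨S, hS, rfl⟩ := hW.2
    exact hO𝒰 _
  · intro y hy
    have : y ∈ ⋃₀ 𝒱' := by rw [h𝒱'cov]; trivial
    obtain ⟨W, hW, hyW⟩ := this
    rcases h𝒱'sub hW with hW𝒲 | hWc
    · exact ⟨W, ⟨hW, hW𝒲⟩, hyW⟩
    · rw [mem_singleton_iff] at hWc
      exact absurd hy (by rwa [hWc] at hyW)




lemma mul_le_a1 {a b : Cardinal.{u}} (ha : a ≤ Cardinal.aleph 1) (hb : b ≤ Cardinal.aleph 1) :
    a * b ≤ Cardinal.aleph 1 :=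
  (mul_le_mul' ha hb).trans (le_of_eq (mul_eq_self (aleph0_le_aleph 1)))

lemma add_le_a1 {a b : Cardinal.{u}} (ha : a ≤ Cardinal.aleph 1) (hb : b ≤ Cardinal.aleph 1) :
    a + b ≤ Cardinal.aleph 1 :=
  (add_le_add ha hb).trans (le_of_eq (add_eq_self (aleph0_le_aleph 1)))

lemma csub_card (hCH : Cardinal.continuum.{u} = Cardinal.aleph 1) {α : Type u} {A : Set α}
    (hA : #A ≤ Cardinal.aleph 1) :
    #({B : Set α | B ⊆ A ∧ B.Countable}) ≤ Cardinal.aleph 1 := by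
  have e : #({B : Set α | B ⊆ A ∧ B.Countable}) = #({B : Set α // B ⊆ A ∧ #B ≤ ℵ₀}) := by
    apply mk_congr
    apply Equiv.subtypeEquivRight
    intro B
    rw [mem_setOf_eq, le_aleph0_iff_set_countable]
  rw [e]
  refine (mk_bounded_subset_le A ℵ₀).trans ?_
  calc max (#A) ℵ₀ ^ Cardinal.aleph0.{u} ≤ (Cardinal.aleph 1) ^ Cardinal.aleph0.{u} :=
        power_le_power_right (max_le hA (aleph0_le_aleph 1))
    _ = Cardinal.aleph 1 := pow_a1 hCH

abbrev Om : Type u := (Cardinal.aleph 1 : Cardinal.{u}).ord.ToType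

lemma countable_bounded (S : Set (Om.{u})) (hS : S.Countable) : ∃ i, ∀ j ∈ S, j < i := by
  haveI : IsWellOrder Om.{u} (· < ·) := isWellOrder_lt
  by_contra h
  push_neg at h
  have hcov : (Set.univ : Set Om.{u}) ⊆ ⋃ j : S, Set.Iic (j : Om.{u}) := by
    intro i _
    obtain ⟨j, hjS, hij⟩ := h i
    exact mem_iUnion.2 ⟨⟨j, hjS⟩, hij⟩
  have h1 : #Om.{u} ≤ #(⋃ j : S, Set.Iic (j : Om.{u})) := by
    rw [← mk_univ]
    exact mk_le_mk_of_subset hcov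
  have h3 : ∀ j : Om.{u}, #(Set.Iic j) ≤ ℵ₀ := by
    intro j
    have hsub : Set.Iic j ⊆ insert j (Set.Iio j) := by rw [Set.Iio_insert]
    refine (mk_le_mk_of_subset hsub).trans ((mk_insert_le).trans ?_)
    have h4 : #(Set.Iio j) < Cardinal.aleph 1 := by
      have heq : #(Set.Iio j) = #({y : Om.{u} // y < j}) := rfl
      rw [heq, ← Ordinal.card_typein (r := (· < ·))]
      exact Cardinal.card_typein_toType_lt (Cardinal.aleph 1) j
    have h5 : #(Set.Iio j) ≤ ℵ₀ := ((countable_iff_lt_aleph_one _).2 h4).le_aleph0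
    calc #(Set.Iio j) + 1 ≤ ℵ₀ + 1 := by gcongr
      _ = ℵ₀ := add_one_eq le_rfl
  have h2 : #(⋃ j : S, Set.Iic (j : Om.{u})) ≤ ℵ₀ := by
    refine (mk_iUnion_le _).trans ?_
    calc #S * ⨆ j : S, #(Set.Iic (j : Om.{u})) ≤ ℵ₀ * ℵ₀ :=
          mul_le_mul' hS.le_aleph0 (ciSup_le' fun j => h3 j)
      _ = ℵ₀ := aleph0_mul_aleph0
  have hΩ : #Om.{u} = Cardinal.aleph 1 := by
    rw [Cardinal.mk_toType, Cardinal.card_ord]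
  exact absurd (hΩ ▸ (h1.trans h2)) (not_le.2 aleph0_lt_aleph_one)


lemma hull (hCH : Cardinal.continuum.{u} = Cardinal.aleph 1)
    {𝒰 : Set (Set X)} (p : Set (Set X) → X) (s : Set X → Set (Set X))
    (hs𝒰 : ∀ B, s B ⊆ 𝒰) (hsc : ∀ B, (s B).Countable) :
    ∃ (A : Set X) (W : Set (Set X)), W ⊆ 𝒰 ∧ #W ≤ Cardinal.aleph 1 ∧
      (∀ B ⊆ A, B.Countable → s B ⊆ W) ∧
      (∀ 𝒱 ⊆ W, 𝒱.Countable → p 𝒱 ∈ A) := by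
  classical
  haveI : IsWellOrder Om.{u} (· < ·) := isWellOrder_lt
  have wf : WellFounded ((· < ·) : Om.{u} → Om.{u} → Prop) :=
    (wellFoundedLT_toType ((Cardinal.aleph 1 : Cardinal.{u}).ord)).wf
  obtain ⟨G, hG⟩ : ∃ G : Om.{u} → Set X × Set (Set X), ∀ i, G i =
      ((⋃ j : {j : Om.{u} // j < i}, (G j).1) ∪
         p '' {𝒱 | 𝒱 ⊆ (⋃ j : {j : Om.{u} // j < i}, (G j).2) ∧ 𝒱.Countable},
       (⋃ j : {j : Om.{u} // j < i}, (G j).2) ∪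
         ⋃ b : {B : Set X // B ⊆ (⋃ j : {j : Om.{u} // j < i}, (G j).1) ∧ B.Countable}, s ↑b) :=
    ⟨wf.fix (fun i ih =>
      ((⋃ j : {j : Om.{u} // j < i}, (ih j j.2).1) ∪
         p '' {𝒱 | 𝒱 ⊆ (⋃ j : {j : Om.{u} // j < i}, (ih j j.2).2) ∧ 𝒱.Countable},
       (⋃ j : {j : Om.{u} // j < i}, (ih j j.2).2) ∪
         ⋃ b : {B : Set X // B ⊆ (⋃ j : {j : Om.{u} // j < i}, (ih j j.2).1) ∧ B.Countable}, s ↑b)),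
     fun i => wf.fix_eq _ i⟩
  -- cardinality bound by well-founded induction
  have hcard : ∀ i : Om.{u}, #((G i).1) ≤ Cardinal.aleph 1 ∧ #((G i).2) ≤ Cardinal.aleph 1 := by
    intro i
    refine wf.induction (C := fun i => #((G i).1) ≤ Cardinal.aleph 1 ∧
      #((G i).2) ≤ Cardinal.aleph 1) i ?_
    intro i ih
    have hidx : #({j : Om.{u} // j < i}) ≤ Cardinal.aleph 1 := by
      rw [← Ordinal.card_typein (r := (· < ·))]
      exact (Cardinal.card_typein_toType_lt (Cardinal.aleph 1) i).le
    have hpA : #(⋃ j : {j : Om.{u} // j < i}, (G j).1) ≤ Cardinal.aleph 1 :=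
      (mk_iUnion_le _).trans (mul_le_a1 hidx (ciSup_le' fun j => (ih j j.2).1))
    have hpW : #(⋃ j : {j : Om.{u} // j < i}, (G j).2) ≤ Cardinal.aleph 1 :=
      (mk_iUnion_le _).trans (mul_le_a1 hidx (ciSup_le' fun j => (ih j j.2).2))
    constructor
    · rw [hG i]
      refine (mk_union_le _ _).trans (add_le_a1 hpA (mk_image_le.trans ?_))
      exact csub_card hCH hpW
    · rw [hG i]
      refine (mk_union_le _ _).trans (add_le_a1 hpW ?_)
      refine (mk_iUnion_le _).trans (mul_le_a1 ?_ (ciSup_le' fun b => ?_))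
      · exact csub_card hCH hpA
      · exact (hsc _).le_aleph0.trans (aleph0_le_aleph 1)
  -- members of second component lie in 𝒰
  have hsub𝒰 : ∀ i : Om.{u}, (G i).2 ⊆ 𝒰 := by
    intro i
    refine wf.induction (C := fun i => (G i).2 ⊆ 𝒰) i ?_
    intro i ih
    rw [hG i]
    rintro U (hU | hU)
    · obtain ⟨j, hj⟩ := mem_iUnion.1 hU
      exact ih j j.2 hj
    · obtain ⟨b, hb⟩ := mem_iUnion.1 hU
      exact hs𝒰 _ hb
  refine ⟨⋃ i : Om.{u}, (G i).1, ⋃ i : Om.{u}, (G i).2, ?_, ?_, ?_, ?_⟩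
  · intro U hU
    obtain ⟨i, hi⟩ := mem_iUnion.1 hU
    exact hsub𝒰 i hi
  · refine (mk_iUnion_le _).trans (mul_le_a1 ?_ (ciSup_le' fun i => (hcard i).2))
    rw [Cardinal.mk_toType, Cardinal.card_ord]
  · intro B hBA hBc
    have hex : ∀ b : B, ∃ i : Om.{u}, (b : X) ∈ (G i).1 := fun b => mem_iUnion.1 (hBA b.2)
    choose idx hidx using hex
    have : Countable B := hBc.to_subtype
    obtain ⟨i, hi⟩ := countable_bounded (Set.range idx) (countable_range idx)
    have hBsub : B ⊆ ⋃ j : {j : Om.{u} // j < i}, (G j).1 := by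
      intro b hb
      exact mem_iUnion.2 ⟨⟨idx ⟨b, hb⟩, hi _ (mem_range_self _)⟩, hidx ⟨b, hb⟩⟩
    have hstep : s B ⊆ (G i).2 := by
      rw [hG i]
      intro U hU
      exact Or.inr (mem_iUnion.2 ⟨⟨B, hBsub, hBc⟩, hU⟩)
    exact hstep.trans (subset_iUnion (fun i : Om.{u} => (G i).2) i)
  · intro 𝒱 h𝒱W h𝒱c
    have hex : ∀ V : 𝒱, ∃ i : Om.{u}, (V : Set X) ∈ (G i).2 := fun V => mem_iUnion.1 (h𝒱W V.2)
    choose idx hidx using hex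
    have : Countable 𝒱 := h𝒱c.to_subtype
    obtain ⟨i, hi⟩ := countable_bounded (Set.range idx) (countable_range idx)
    have h𝒱sub : 𝒱 ⊆ ⋃ j : {j : Om.{u} // j < i}, (G j).2 := by
      intro V hV
      exact mem_iUnion.2 ⟨⟨idx ⟨V, hV⟩, hi _ (mem_range_self _)⟩, hidx ⟨V, hV⟩⟩
    have hstep : p 𝒱 ∈ (G i).1 := by
      rw [hG i]
      exact Or.inr ⟨𝒱, ⟨h𝒱sub, h𝒱c⟩, rfl⟩
    exact mem_iUnion.2 ⟨i, hstep⟩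


end Stmt5Proof

/-- Under CH, a Tychonoff space of countable tightness in which every
open cover of size at most ω₁ has a countable subcover is Lindelöf. -/


theorem stmt5 (hCH : Cardinal.continuum = Cardinal.aleph 1)
    (X : Type u) [TopologicalSpace X] [T1Space X] [CompletelyRegularSpace X]
    (ht : CountableTightness X)
    (hsmall : ∀ 𝒰 : Set (Set X), (∀ U ∈ 𝒰, IsOpen U) → ⋃₀ 𝒰 = Set.univ →
      #𝒰 ≤ Cardinal.aleph 1 → ∃ 𝒱 ⊆ 𝒰, 𝒱.Countable ∧ ⋃₀ 𝒱 = Set.univ) :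
    QuasiLindelofSp X := by
  classical
  intro 𝒰 hopen hcov
  by_contra hnc
  push_neg at hnc
  have hXne : Nonempty X := by
    by_contra hX
    rw [not_nonempty_iff] at hX
    exact hnc ∅ (empty_subset _) countable_empty
      ((Set.sUnion_empty).trans (Set.univ_eq_empty_iff.2 hX).symm)
  -- choose witnesses avoiding countable subfamilies
  have hp' : ∀ 𝒱 : Set (Set X), ∃ x : X, (𝒱 ⊆ 𝒰 ∧ 𝒱.Countable) → x ∉ ⋃₀ 𝒱 := by
    intro 𝒱
    by_cases h : 𝒱 ⊆ 𝒰 ∧ 𝒱.Countable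
    · have hne := hnc 𝒱 h.1 h.2
      have hex : ∃ x, x ∉ ⋃₀ 𝒱 := by
        by_contra hc
        push_neg at hc
        exact hne (Set.eq_univ_of_forall hc)
      obtain ⟨x, hx⟩ := hex
      exact ⟨x, fun _ => hx⟩
    · exact ⟨Classical.arbitrary X, fun hh => absurd hh h⟩
  choose p hp using hp'
  -- choose countable subfamilies covering closures of countable sets
  have hs' : ∀ B : Set X, ∃ 𝒱 : Set (Set X), 𝒱 ⊆ 𝒰 ∧ 𝒱.Countable ∧
      (B.Countable → closure B ⊆ ⋃₀ 𝒱) := by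
    intro B
    by_cases h : B.Countable
    · obtain ⟨𝒱, h1, h2, h3⟩ := Stmt5Proof.sep_cover (Stmt5Proof.CH_transfer hCH) hopen hcov hsmall h
      exact ⟨𝒱, h1, h2, fun _ => h3⟩
    · exact ⟨∅, empty_subset _, countable_empty, fun hB => absurd hB h⟩
  choose s hs𝒰 hsc hscov using hs'
  obtain ⟨A, W, hW𝒰, hWcard, hclos, hpmem⟩ := Stmt5Proof.hull (Stmt5Proof.CH_transfer hCH) p s hs𝒰 hsc
  -- the small cover
  obtain ⟨𝒱', h𝒱'sub, h𝒱'c, h𝒱'cov⟩ := hsmall (W ∪ {(closure A)ᶜ})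
    (by
      rintro U (hU | hU)
      · exact hopen _ (hW𝒰 hU)
      · rw [Set.mem_singleton_iff] at hU
        rw [hU]
        exact isClosed_closure.isOpen_compl)
    (by
      apply Set.eq_univ_of_forall
      intro x
      by_cases hx : x ∈ closure A
      · obtain ⟨B, hBA, hBc, hxB⟩ := ht A x hx
        have h1 : closure B ⊆ ⋃₀ s B := hscov B hBc
        have h2 : s B ⊆ W := hclos B hBA hBc
        obtain ⟨U, hU, hxU⟩ := h1 hxB
        exact ⟨U, Or.inl (h2 hU), hxU⟩
      · exact ⟨(closure A)ᶜ, Or.inr rfl, hx⟩)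
    (by
      refine (Cardinal.mk_union_le _ _).trans ?_
      rw [Cardinal.mk_singleton]
      exact Stmt5Proof.add_le_a1 hWcard
        (le_trans (by norm_num) (Cardinal.aleph0_le_aleph 1)))
  -- the contradiction
  have h𝒱W : 𝒱' ∩ W ⊆ W := Set.inter_subset_right
  have h𝒱c : (𝒱' ∩ W).Countable := h𝒱'c.mono Set.inter_subset_left
  have hpV : p (𝒱' ∩ W) ∈ A := hpmem (𝒱' ∩ W) h𝒱W h𝒱c
  have hnot : p (𝒱' ∩ W) ∉ ⋃₀ (𝒱' ∩ W) := hp (𝒱' ∩ W) ⟨h𝒱W.trans hW𝒰, h𝒱c⟩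
  have hmem : p (𝒱' ∩ W) ∈ ⋃₀ 𝒱' := by rw [h𝒱'cov]; trivial
  obtain ⟨Wz, hWz, hz⟩ := hmem
  rcases h𝒱'sub hWz with hzW | hzc
  · exact hnot ⟨Wz, ⟨hWz, hzW⟩, hz⟩
  · rw [Set.mem_singleton_iff] at hzc
    rw [hzc] at hz
    exact hz (subset_closure hpV)
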